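/- Let I be a Borel-fixed monomial ideal in S = K[x_0,...,x_n] with minimal monomial generating set G(I). Then the saturation of I (with respect to the irrelevant maximal ideal (x_0,...,x_n)) is generated by the monomials obtained from G(I) by substituting x_n = 1 in each generator. -/
import Mathlib


open MvPolynomial

def IsMonomialIdeal {n : ℕ} {K : Type*} [CommRing K]
    (I : Ideal (MvPolynomial (Fin (n + 1)) K)) : Prop :=
  ∀ p ∈ I, ∀ A ∈ p.support, (monomial A (1 : K)) ∈ I

def BorelCombinatorial {n : ℕ} {K : Type*} [CommRing K]
    (I : Ideal (MvPolynomial (Fin (n + 1)) K)) : Prop :=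
  ∀ A : Fin (n + 1) →₀ ℕ, monomial A (1 : K) ∈ I →
    ∀ j : Fin (n + 1), A j ≠ 0 → ∀ i : Fin (n + 1), i < j →
      monomial (A + Finsupp.single i 1 - Finsupp.single j 1) (1 : K) ∈ I

/-- Borel exchange iterated: move all the `x_last` exponent onto `x_i`. -/
lemma borel_move {n : ℕ} {K : Type*} [Field K]
    {I : Ideal (MvPolynomial (Fin (n + 1)) K)} (hB : BorelCombinatorial I)
    {A : Fin (n + 1) →₀ ℕ} (hA : monomial A (1 : K) ∈ I) (i : Fin (n + 1)) :
    monomial (A.erase (Fin.last n) + Finsupp.single i (A (Fin.last n))) (1 : K) ∈ I := by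
  rcases eq_or_lt_of_le (Fin.le_last i) with h | h
  · rw [h, Finsupp.erase_add_single]; exact hA
  · have main : ∀ t, t ≤ A (Fin.last n) →
        monomial (A.erase (Fin.last n)
          + Finsupp.single (Fin.last n) (A (Fin.last n) - t)
          + Finsupp.single i t) (1 : K) ∈ I := by
      intro t
      induction t with
      | zero =>
        intro _
        simpa [Finsupp.erase_add_single] using hA
      | succ t ih =>
        intro ht
        have ht' : t ≤ A (Fin.last n) := Nat.le_of_succ_le ht
        have hprev := ih ht'
        have hilast : i ≠ Fin.last n := Fin.ne_of_lt h
        have hne : (A.erase (Fin.last n)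
            + Finsupp.single (Fin.last n) (A (Fin.last n) - t)
            + Finsupp.single i t) (Fin.last n) ≠ 0 := by
          simp only [Finsupp.add_apply, Finsupp.erase_same,
            Finsupp.single_eq_same, Finsupp.single_apply, if_neg hilast]
          omega
        have hstep := hB _ hprev (Fin.last n) hne i h
        have heq : (A.erase (Fin.last n)
              + Finsupp.single (Fin.last n) (A (Fin.last n) - t)
              + Finsupp.single i t) + Finsupp.single i 1 - Finsupp.single (Fin.last n) 1
            = A.erase (Fin.last n)
              + Finsupp.single (Fin.last n) (A (Fin.last n) - (t + 1))
              + Finsupp.single i (t + 1) := by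
          ext j
          rcases eq_or_ne j (Fin.last n) with rfl | hj
          · simp only [Finsupp.tsub_apply, Finsupp.add_apply, Finsupp.erase_same,
              Finsupp.single_eq_same, Finsupp.single_apply, if_neg hilast]
            omega
          · simp only [Finsupp.tsub_apply, Finsupp.add_apply, Finsupp.erase_ne hj,
              Finsupp.single_apply, if_neg (Ne.symm hj)]
            rcases eq_or_ne i j with rfl | hij
            · simp only [if_pos rfl, if_true]; omega
            · simp only [if_neg hij]; omega
        rw [heq] at hstep
        exact hstep
    simpa using main (A (Fin.last n)) le_rfl

/-- If `I` is a Borel-fixed monomial ideal with minimal monomial generating set `G`,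
then the saturation of `I` (w.r.t. `(x_0, …, x_n)`) is generated by the monomials
obtained from `G` by setting `x_n = 1` (i.e. erasing the last exponent). -/
theorem stmt1 {n : ℕ} {K : Type*} [Field K] [CharZero K]
    (I : Ideal (MvPolynomial (Fin (n + 1)) K)) (hI : IsMonomialIdeal I)
    (hB : BorelCombinatorial I)
    (G : Set (Fin (n + 1) →₀ ℕ))
    (hGen : I = Ideal.span ((fun A => monomial A (1 : K)) '' G))
    (hMin : ∀ A ∈ G,
      monomial A (1 : K) ∉ Ideal.span ((fun B => monomial B (1 : K)) '' (G \ {A}))) :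
    {f : MvPolynomial (Fin (n + 1)) K | ∀ i : Fin (n + 1), ∃ k : ℕ, (X i) ^ k * f ∈ I} =
      ↑(Ideal.span ((fun A => monomial (A.erase (Fin.last n)) (1 : K)) '' G)) := by
  classical
  set L := Fin.last n with hL
  have himg : ((fun A : Fin (n+1) →₀ ℕ => monomial (A.erase L) (1 : K)) '' G)
      = (fun s => monomial s (1 : K)) '' ((fun A : Fin (n+1) →₀ ℕ => A.erase L) '' G) := by
    rw [Set.image_image]
  ext f
  simp only [Set.mem_setOf_eq, SetLike.mem_coe]
  rw [himg]
  constructor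
  · intro hf
    obtain ⟨k, hk⟩ := hf L
    rw [hGen, mem_ideal_span_monomial_image] at hk
    rw [mem_ideal_span_monomial_image]
    intro B hB'
    have hBmem : Finsupp.single L k + B ∈ (X (R := K) L ^ k * f).support := by
      rw [mem_support_iff, X_pow_eq_monomial, coeff_monomial_mul, one_mul]
      exact mem_support_iff.mp hB'
    obtain ⟨A, hA, hAle⟩ := hk _ hBmem
    refine ⟨A.erase L, Set.mem_image_of_mem _ hA, ?_⟩
    intro j
    rcases eq_or_ne j L with rfl | hj
    · simp
    · have h1 := hAle j
      simp only [Finsupp.add_apply, Finsupp.single_apply, if_neg (Ne.symm hj)] at h1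
      simpa [Finsupp.erase_apply, hj] using h1
  · intro hf i
    rw [mem_ideal_span_monomial_image] at hf
    have hf' : ∀ B ∈ f.support, ∃ A, A ∈ G ∧ A.erase L ≤ B := by
      intro B hB'
      obtain ⟨s, ⟨A, hA, rfl⟩, hle⟩ := hf B hB'
      exact ⟨A, hA, hle⟩
    choose! A hAG hAle using hf'
    refine ⟨f.support.sup (fun B => A B L), ?_⟩
    set k := f.support.sup (fun B => A B L) with hk
    rw [hGen, mem_ideal_span_monomial_image]
    intro C hC
    -- C is in the support of X i ^ k * f, so C = single i k + B for some B ∈ f.support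
    rw [mem_support_iff, X_pow_eq_monomial, coeff_monomial_mul'] at hC
    by_cases hle : Finsupp.single i k ≤ C
    swap
    · simp [hle] at hC
    rw [if_pos hle, one_mul] at hC
    set B := C - Finsupp.single i k with hBdef
    have hBsupp : B ∈ f.support := mem_support_iff.mpr hC
    have hCeq : C = Finsupp.single i k + B := by
      rw [hBdef, add_tsub_cancel_of_le hle]
    -- the Borel-moved generator is in I, hence dominates some element of G
    have hmoved : monomial ((A B).erase L + Finsupp.single i ((A B) L)) (1 : K) ∈ I :=
      borel_move hB (by
        rw [hGen, mem_ideal_span_monomial_image]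
        intro D hD
        rw [support_monomial, if_neg (one_ne_zero)] at hD
        simp only [Finset.mem_singleton] at hD
        subst hD
        exact ⟨A B, hAG B hBsupp, le_rfl⟩) i
    rw [hGen, mem_ideal_span_monomial_image] at hmoved
    obtain ⟨s, hs, hsle⟩ := hmoved _ (by
      rw [support_monomial, if_neg (one_ne_zero)]; exact Finset.mem_singleton_self _)
    refine ⟨s, hs, hsle.trans ?_⟩
    -- (A B).erase L + single i ((A B) L) ≤ single i k + B
    have hkB : A B L ≤ k := by rw [hk]; exact Finset.le_sup (f := fun B => A B L) hBsupp
    rw [hCeq]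
    intro j
    have hAj := hAle B hBsupp j
    rcases eq_or_ne j L with rfl | hj
    · simp only [Finsupp.add_apply, Finsupp.erase_same, Finsupp.single_apply] at hAj ⊢
      rcases eq_or_ne i L with rfl | hi
      · simp only [if_pos rfl, if_true]; omega
      · simp only [if_neg hi]; omega
    · simp only [Finsupp.add_apply, Finsupp.erase_ne hj, Finsupp.single_apply] at hAj ⊢
      rcases eq_or_ne i j with rfl | hij
      · simp only [if_pos rfl, if_true]; omega
      · simp only [if_neg hij]; omega
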